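/- Let A ⊆ ℝ² be a finite set and let x, x₁ ∈ ℝ² be distinct points such that the closed segment [x, x₁] meets A only possibly at x (segment ℝ x x₁ ∩ A ⊆ {x}). Let m = (x + x₁)/2 be the midpoint of x and x₁. Then there exists a positive definite quadratic form Q on ℝ² such that the closed ellipsoid E = {p ∈ ℝ² | Q (p − m) ≤ 1} centered at m contains the segment [x, x₁] and satisfies E ∩ A ⊆ {x}. -/

import Mathlib

open RealInnerProductSpace

noncomputable def ellipsoidBilin (e : EuclideanSpace ℝ (Fin 2)) (γ β : ℝ) :
    LinearMap.BilinMap ℝ (EuclideanSpace ℝ (Fin 2)) ℝ :=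
  LinearMap.mk₂ ℝ (fun v w => γ * (⟪v, e⟫ * ⟪w, e⟫) + β * ⟪v, w⟫)
    (by intro v v' w; simp [inner_add_left]; ring)
    (by intro a v w; simp [inner_smul_left]; ring)
    (by intro v w w'; simp [inner_add_right, inner_add_left]; ring)
    (by intro a v w; simp [inner_smul_right, real_inner_smul_left]; ring)

lemma abs_bound_of_sq_le (t r : ℝ) (hr : 0 < r) (h : t ^ 2 ≤ r ^ 2 / 4) :
    -(r/2) ≤ t ∧ t ≤ r/2 := by
  constructor <;> nlinarith [sq_nonneg (t + r/2), sq_nonneg (t - r/2)]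

/-- Given a finite set `A` and distinct points `x, x₁` whose joining segment meets `A`
at most at `x`, there is a closed ellipsoid centered at the midpoint of `x` and `x₁`
(given by a positive definite quadratic form) containing the segment and meeting `A`
at most at `x`. -/
theorem exists_ellipsoid_centered_at_midpoint_containing_segment
    (A : Set (EuclideanSpace ℝ (Fin 2))) (hA : A.Finite)
    (x x₁ : EuclideanSpace ℝ (Fin 2)) (hne : x ≠ x₁)
    (hseg : segment ℝ x x₁ ∩ A ⊆ {x})
    (m : EuclideanSpace ℝ (Fin 2)) (hm : m = midpoint ℝ x x₁) :
    ∃ Q : QuadraticForm ℝ (EuclideanSpace ℝ (Fin 2)), Q.PosDef ∧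
      segment ℝ x x₁ ⊆ {p : EuclideanSpace ℝ (Fin 2) | Q (p - m) ≤ 1} ∧
      {p : EuclideanSpace ℝ (Fin 2) | Q (p - m) ≤ 1} ∩ A ⊆ {x} := by
  set u : EuclideanSpace ℝ (Fin 2) := x₁ - x with hu
  have hu0 : u ≠ 0 := sub_ne_zero.mpr (Ne.symm hne)
  set r : ℝ := ‖u‖ with hr
  have hr0 : 0 < r := norm_pos_iff.mpr hu0
  set e : EuclideanSpace ℝ (Fin 2) := (r⁻¹ : ℝ) • u with he
  have he1 : ‖e‖ = 1 := by
    rw [he, norm_smul, norm_inv, Real.norm_eq_abs, abs_of_pos hr0, ← hr,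
      inv_mul_cancel₀ hr0.ne']
  have hm' : m = x + (1/2 : ℝ) • u := by
    rw [hm, hu, midpoint_eq_smul_add, invOf_eq_inv]
    module
  set c : ℝ := 4 / r ^ 2 with hc
  have hc0 : 0 < c := by positivity
  set d : EuclideanSpace ℝ (Fin 2) → ℝ := fun a => ‖a - m‖ ^ 2 - ⟪a - m, e⟫ ^ 2 with hd
  have hcs : ∀ v : EuclideanSpace ℝ (Fin 2), ⟪v, e⟫ ^ 2 ≤ ‖v‖ ^ 2 := by
    intro v
    have h1 : |⟪v, e⟫| ≤ ‖v‖ * ‖e‖ := abs_real_inner_le_norm _ _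
    rw [he1, mul_one] at h1
    calc ⟪v, e⟫ ^ 2 = |⟪v, e⟫| ^ 2 := (sq_abs _).symm
    _ ≤ ‖v‖ ^ 2 := pow_le_pow_left₀ (abs_nonneg _) h1 2
  have hdnn : ∀ a, 0 ≤ d a := by
    intro a
    have := hcs (a - m)
    simp only [hd]
    linarith
  obtain ⟨M, hM⟩ := Finset.exists_le (hA.toFinset.image (fun a => 1 / d a))
  set β : ℝ := max c (M + 1) with hβ
  have hβc : c ≤ β := le_max_left _ _
  have hβ0 : 0 < β := lt_of_lt_of_le hc0 hβc
  have hβd : ∀ a ∈ A, 0 < d a → 1 < β * d a := by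
    intro a ha hda
    have h1 : 1 / d a ≤ M := hM _ (Finset.mem_image_of_mem _ (hA.mem_toFinset.mpr ha))
    have h2 : 1 / d a < β :=
      lt_of_le_of_lt (h1.trans (by linarith)) (lt_of_lt_of_le (lt_add_one M) (le_max_right _ _))
    calc 1 = (1 / d a) * d a := by field_simp
    _ < β * d a := mul_lt_mul_of_pos_right h2 hda
  have huu : ⟪u, u⟫ = r ^ 2 := by rw [real_inner_self_eq_norm_sq, hr]
  refine ⟨(ellipsoidBilin e (c - β) β).toQuadraticMap, ?_, ?_, ?_⟩
  · -- PosDef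
    intro v hv
    have hQ : (ellipsoidBilin e (c - β) β).toQuadraticMap v
        = (c - β) * (⟪v, e⟫ * ⟪v, e⟫) + β * ⟪v, v⟫ := rfl
    rw [hQ, real_inner_self_eq_norm_sq]
    have h3 : 0 < ‖v‖ := norm_pos_iff.mpr hv
    nlinarith [hcs v, mul_nonneg (sub_nonneg.mpr hβc) (sub_nonneg.mpr (hcs v)),
      mul_pos hc0 (pow_pos h3 2)]
  · -- segment inclusion
    intro p hp
    rw [segment_eq_image'] at hp
    obtain ⟨s, hs, rfl⟩ := hp
    have hpm : x + s • (x₁ - x) - m = (s - 1/2) • u := by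
      rw [hm', hu]; module
    show (ellipsoidBilin e (c - β) β).toQuadraticMap (x + s • (x₁ - x) - m) ≤ 1
    rw [hpm]
    have hQ : (ellipsoidBilin e (c - β) β).toQuadraticMap ((s - 1/2) • u)
        = (c - β) * (⟪(s - 1/2) • u, e⟫ * ⟪(s - 1/2) • u, e⟫)
          + β * ⟪(s - 1/2) • u, (s - 1/2) • u⟫ := rfl
    have hA1 : ⟪(s - 1/2) • u, e⟫ = (s - 1/2) * r := by
      rw [real_inner_smul_left, he, real_inner_smul_right, huu]
      field_simp
    have hA2 : ⟪(s - 1/2) • u, (s - 1/2) • u⟫ = (s - 1/2) ^ 2 * r ^ 2 := by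
      rw [real_inner_smul_left, real_inner_smul_right, huu]; ring
    rw [hQ, hA1, hA2, hc]
    have hs1 : 0 ≤ s := hs.1
    have hs2 : s ≤ 1 := hs.2
    have key : (s - 1/2) ^ 2 ≤ 1 / 4 := by nlinarith
    have heq : (4 / r ^ 2 - β) * ((s - 1/2) * r * ((s - 1/2) * r))
          + β * ((s - 1/2) ^ 2 * r ^ 2) = 4 * (s - 1/2) ^ 2 := by
      field_simp; ring
    rw [heq]
    linarith
  · -- ellipsoid ∩ A ⊆ {x}
    rintro a ⟨haQ, haA⟩
    simp only [Set.mem_setOf_eq] at haQ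
    set v : EuclideanSpace ℝ (Fin 2) := a - m with hv
    set t : ℝ := ⟪v, e⟫ with ht
    have hQ : (ellipsoidBilin e (c - β) β).toQuadraticMap v
        = (c - β) * (t * t) + β * ⟪v, v⟫ := rfl
    rw [hQ] at haQ
    have h2 : ⟪v, v⟫ = ‖v‖ ^ 2 := real_inner_self_eq_norm_sq v
    have hsplit : (c - β) * (t * t) + β * ⟪v, v⟫ = c * t ^ 2 + β * d a := by
      rw [h2, hd]; simp only [← hv, ← ht]; ring
    rw [hsplit] at haQ
    have hd0 : d a = 0 := by
      by_contra h
      have hda : 0 < d a := lt_of_le_of_ne (hdnn a) (Ne.symm h)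
      have h5 := hβd a haA hda
      have h6 : 0 ≤ c * t ^ 2 := mul_nonneg hc0.le (sq_nonneg t)
      linarith
    have hvnorm : ‖v‖ ^ 2 = t ^ 2 := by
      have := hd0; rw [hd] at this; simp only [← hv, ← ht] at this; linarith
    have hveq : v = t • e := by
      have hnorm : ‖v - t • e‖ ^ 2 = 0 := by
        rw [norm_sub_sq_real, real_inner_smul_right, norm_smul, Real.norm_eq_abs, he1,
          mul_one, ← ht, hvnorm, sq_abs]
        ring
      have h0 := (pow_eq_zero_iff (two_ne_zero)).mp hnorm
      exact sub_eq_zero.mp (norm_eq_zero.mp h0)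
    have htle : t ^ 2 ≤ r ^ 2 / 4 := by
      rw [hd0, hc] at haQ
      have h4 : 4 / r ^ 2 * t ^ 2 ≤ 1 := by linarith
      calc t ^ 2 = (4 / r ^ 2 * t ^ 2) * (r ^ 2 / 4) := by field_simp
      _ ≤ 1 * (r ^ 2 / 4) := mul_le_mul_of_nonneg_right h4 (by positivity)
      _ = r ^ 2 / 4 := one_mul _
    obtain ⟨hlo, hhi⟩ := abs_bound_of_sq_le t r hr0 htle
    have haseg : a ∈ segment ℝ x x₁ := by
      rw [segment_eq_image']
      refine ⟨1/2 + t / r, ⟨?_, ?_⟩, ?_⟩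
      · have : -(1/2 : ℝ) ≤ t / r := by rw [le_div_iff₀ hr0]; linarith
        linarith
      · have : t / r ≤ 1/2 := by rw [div_le_iff₀ hr0]; linarith
        linarith
      · have hav : a = m + v := by rw [hv]; abel
        rw [hav, hveq, hm', he, smul_smul, (div_eq_mul_inv t r).symm, ← hu]
        module
    exact hseg ⟨haseg, haA⟩
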